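/- Assume Y_1, …, Y_N are i.i.d. under P with Y_1 not P-almost surely constant, and n ≥ 2. Then under the SRSWR design, for any two draws k ≠ ℓ, the sample variables Y_{i(k)} and Y_{i(ℓ)} are NOT stochastically independent under the joint measure P_{d,m}. -/

import Mathlib

open MeasureTheory Filter Topology ProbabilityTheory Set

lemma zero_one_measure_exists_singleton (μ : Measure ℝ) [IsProbabilityMeasure μ]
    (h : ∀ A : Set ℝ, MeasurableSet A → μ A = 0 ∨ μ A = 1) :
    ∃ c : ℝ, μ {c} = 1 := by
  set F := cdf μ with hF
  have hFval : ∀ x, F x = 0 ∨ F x = 1 := by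
    intro x
    rcases h (Iic x) measurableSet_Iic with h0 | h1
    · left; rw [cdf_eq_real, measureReal_def, h0]; simp
    · right; rw [cdf_eq_real, measureReal_def, h1]; simp
  have hmono : Monotone F := monotone_cdf μ
  have hS : ∃ x, F x = 1 := by
    have := tendsto_cdf_atTop μ
    have h2 : ∀ᶠ x : ℝ in atTop, F x > 1/2 :=
      this.eventually (eventually_gt_nhds (by norm_num))
    rcases h2.exists with ⟨x, hx⟩
    refine ⟨x, ?_⟩
    rcases hFval x with h0 | h1
    · rw [h0] at hx; norm_num at hx
    · exact h1
  have hB : ∃ b : ℝ, ∀ x ∈ {x | F x = 1}, b ≤ x := by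
    have := tendsto_cdf_atBot μ
    have h2 : ∀ᶠ x : ℝ in atBot, F x < 1/2 :=
      this.eventually (eventually_lt_nhds (by norm_num))
    rcases h2.exists with ⟨b, hb⟩
    refine ⟨b, fun x hx => ?_⟩
    by_contra hlt
    push_neg at hlt
    have : F b ≥ F x := hmono hlt.le
    rw [hx] at this
    linarith
  obtain ⟨b, hb⟩ := hB
  set c := sInf {x | F x = 1} with hc
  have hne : {x | F x = 1}.Nonempty := hS
  have hbdd : BddBelow {x | F x = 1} := ⟨b, hb⟩
  have hFone : ∀ x, c < x → F x = 1 := by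
    intro x hx
    obtain ⟨s, hs, hsx⟩ := (csInf_lt_iff hbdd hne).mp hx
    have := hmono hsx.le
    rw [hs] at this
    rcases hFval x with h0 | h1
    · rw [h0] at this; norm_num at this
    · exact h1
  have hFzero : ∀ x, x < c → F x = 0 := by
    intro x hx
    rcases hFval x with h0 | h1
    · exact h0
    · exact absurd (csInf_le hbdd h1) (not_le.mpr hx)
  have hFc : F c = 1 := by
    have h1 : Tendsto F (𝓝[>] c) (𝓝 (F c)) :=
      (F.right_continuous c).tendsto.mono_left (nhdsWithin_mono _ Ioi_subset_Ici_self)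
    have h2 : Tendsto F (𝓝[>] c) (𝓝 1) := by
      apply Tendsto.congr' _ tendsto_const_nhds
      filter_upwards [self_mem_nhdsWithin] with x hx
      exact (hFone x hx).symm
    exact tendsto_nhds_unique h1 h2
  have hleft : Function.leftLim F c = 0 := by
    apply leftLim_eq_of_tendsto (h := nhdsLT_neBot c)
    apply Tendsto.congr' _ tendsto_const_nhds
    filter_upwards [self_mem_nhdsWithin] with x hx
    exact (hFzero x hx).symm
  refine ⟨c, ?_⟩
  have h2 := F.measure_singleton c
  rw [show F.measure = μ from measure_cdf μ] at h2
  rw [h2, hFc, hleft]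
  norm_num

lemma count_eq_fiber (n N : ℕ) (k l : Fin n) (hkl : k ≠ l) :
    (Finset.univ.filter (fun s : Fin n → Fin N => s k = s l)).card = N ^ (n - 1) := by
  have e : {s : Fin n → Fin N // s k = s l} ≃ ({m : Fin n // m ≠ l} → Fin N) :=
    { toFun := fun s m => s.1 m.1
      invFun := fun t => ⟨fun m => if h : m = l then t ⟨k, hkl⟩ else t ⟨m, h⟩, by
        simp [hkl]⟩
      left_inv := by
        rintro ⟨s, hs⟩
        ext m
        dsimp
        by_cases h : m = l
        · subst h; simp [hs]
        · simp [h]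
      right_inv := by
        intro t
        ext m
        simp [m.2] }
  have hcard : Fintype.card {m : Fin n // m ≠ l} = n - 1 := by
    have := Fintype.card_subtype_compl (fun m : Fin n => m = l)
    simp only [Fintype.card_subtype_eq, Fintype.card_fin] at this
    exact this
  have h1 : (Finset.univ.filter (fun s : Fin n → Fin N => s k = s l)).card
      = Fintype.card {s : Fin n → Fin N // s k = s l} := (Fintype.card_subtype _).symm
  rw [h1, Fintype.card_congr e, Fintype.card_fun, Fintype.card_fin, hcard]

/-- If `Y_1, …, Y_N` are i.i.d. under `P` with `Y_1` not `P`-a.s. constant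
and `n ≥ 2`, then under the SRSWR design (joint measure `P_{d,m} = Q ⊗ P` with
`Q {s} = N^{−n}` for every `s`), for any two draws `k ≠ ℓ` the sample variables `Y_{i(k)}`
and `Y_{i(ℓ)}` are NOT stochastically independent under `P_{d,m}`. -/
theorem statement16
    {Ω : Type*} [MeasurableSpace Ω] (P : Measure Ω) [IsProbabilityMeasure P]
    (n N : ℕ) (hn : 2 ≤ n) (hN : 1 ≤ N)
    (Y : Fin N → Ω → ℝ) (hYmeas : ∀ i, Measurable (Y i))
    (hYindep : iIndepFun Y P)
    (hYident : ∀ i, P.map (Y i) = P.map (Y ⟨0, by omega⟩))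
    (hYnc : ¬ ∃ c : ℝ, ∀ᵐ ω ∂P, Y ⟨0, by omega⟩ ω = c)
    (Q : Measure (Fin n → Fin N)) [IsProbabilityMeasure Q]
    (hQ : ∀ s : Fin n → Fin N, Q {s} = ((N : ENNReal) ^ n)⁻¹) :
    ∀ (k l : Fin n), k ≠ l →
      ¬ IndepFun (fun x : (Fin n → Fin N) × Ω => Y (x.1 k) x.2)
          (fun x : (Fin n → Fin N) × Ω => Y (x.1 l) x.2) (Q.prod P) := by
  intro k l hkl hIndep
  have h0N : (0 : ℕ) < N := hN
  set Y0 : Ω → ℝ := Y ⟨0, by omega⟩ with hY0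
  set μ0 : Measure ℝ := P.map Y0 with hμ0
  have hμ0prob : IsProbabilityMeasure μ0 := Measure.isProbabilityMeasure_map (hYmeas _).aemeasurable
  -- measurability of the sample variables
  have hmeasm : ∀ m : Fin n, Measurable (fun x : (Fin n → Fin N) × Ω => Y (x.1 m) x.2) := by
    intro m
    have hg : Measurable (fun q : Ω × (Fin n → Fin N) => Y (q.2 m) q.1) :=
      measurable_from_prod_countable_left (fun s => hYmeas (s m))
    exact hg.comp measurable_swap
  -- constants about (N : ENNReal) ^ n
  have hT0 : ((N : ENNReal) ^ n) ≠ 0 := by positivity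
  have hTtop : ((N : ENNReal) ^ n) ≠ ⊤ := by
    exact ENNReal.pow_ne_top (ENNReal.natCast_ne_top N)
  -- zero-one law for μ0
  have hzo : ∀ A : Set ℝ, MeasurableSet A → μ0 A = 0 ∨ μ0 A = 1 := by
    intro A hA
    set p := μ0 A with hp
    have hptop : p ≠ ⊤ := (measure_lt_top μ0 A).ne
    have hident' : ∀ i, P (Y i ⁻¹' A) = p := by
      intro i
      rw [hp, ← hYident i, Measure.map_apply (hYmeas i) hA]
    -- marginals
    have hmarg : ∀ m : Fin n,
        (Q.prod P) ((fun x : (Fin n → Fin N) × Ω => Y (x.1 m) x.2) ⁻¹' A) = p := by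
      intro m
      rw [Measure.prod_apply ((hmeasm m) hA)]
      have : ∀ s : Fin n → Fin N,
          P (Prod.mk s ⁻¹' ((fun x : (Fin n → Fin N) × Ω => Y (x.1 m) x.2) ⁻¹' A)) = p := by
        intro s
        have : (Prod.mk s ⁻¹' ((fun x : (Fin n → Fin N) × Ω => Y (x.1 m) x.2) ⁻¹' A))
            = Y (s m) ⁻¹' A := rfl
        rw [this, hident']
      simp only [this]
      simp
    -- the joint probability
    have hslice : ∀ s : Fin n → Fin N,
        P ((Y (s k) ⁻¹' A) ∩ (Y (s l) ⁻¹' A)) = if s k = s l then p else p * p := by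
      intro s
      by_cases h : s k = s l
      · rw [if_pos h, h, Set.inter_self, hident']
      · rw [if_neg h]
        have hind : IndepFun (Y (s k)) (Y (s l)) P := hYindep.indepFun h
        rw [hind.measure_inter_preimage_eq_mul A A hA hA, hident', hident']
    have hjoint : (Q.prod P)
        (((fun x : (Fin n → Fin N) × Ω => Y (x.1 k) x.2) ⁻¹' A)
          ∩ ((fun x : (Fin n → Fin N) × Ω => Y (x.1 l) x.2) ⁻¹' A))
        = (((N ^ (n-1) : ℕ) : ENNReal) * p + ((N^n - N^(n-1) : ℕ) : ENNReal) * (p * p))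
            * ((N : ENNReal) ^ n)⁻¹ := by
      rw [Measure.prod_apply (((hmeasm k) hA).inter ((hmeasm l) hA))]
      have hsl : ∀ s : Fin n → Fin N,
          P (Prod.mk s ⁻¹' (((fun x : (Fin n → Fin N) × Ω => Y (x.1 k) x.2) ⁻¹' A)
            ∩ ((fun x : (Fin n → Fin N) × Ω => Y (x.1 l) x.2) ⁻¹' A)))
          = if s k = s l then p else p * p := by
        intro s
        have : (Prod.mk s ⁻¹' (((fun x : (Fin n → Fin N) × Ω => Y (x.1 k) x.2) ⁻¹' A)
            ∩ ((fun x : (Fin n → Fin N) × Ω => Y (x.1 l) x.2) ⁻¹' A)))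
            = (Y (s k) ⁻¹' A) ∩ (Y (s l) ⁻¹' A) := rfl
        rw [this, hslice]
      simp only [hsl]
      rw [lintegral_fintype]
      simp only [hQ]
      rw [← Finset.sum_mul]
      congr 1
      rw [Finset.sum_ite, Finset.sum_const, Finset.sum_const, nsmul_eq_mul, nsmul_eq_mul]
      have hcT : (Finset.univ.filter (fun s : Fin n → Fin N => s k = s l)).card
          = N ^ (n - 1) := count_eq_fiber n N k l hkl
      have hsum : (Finset.univ.filter (fun s : Fin n → Fin N => s k = s l)).card
          + (Finset.univ.filter (fun s : Fin n → Fin N => ¬ s k = s l)).card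
          = N ^ n := by
        rw [Finset.card_filter_add_card_filter_not, Finset.card_univ,
          Fintype.card_fun]
        simp
      have hcF : (Finset.univ.filter (fun s : Fin n → Fin N => ¬ s k = s l)).card
          = N ^ n - N ^ (n-1) := by
        rw [← hcT]
        exact Nat.eq_sub_of_add_eq' hsum
      rw [hcT, hcF]
    -- use independence
    have hmul := hIndep.measure_inter_preimage_eq_mul A A hA hA
    rw [hjoint, hmarg k, hmarg l] at hmul
    -- clear the factor (N^n)⁻¹
    have hTcast : ((N : ENNReal) ^ n) = ((N ^ n : ℕ) : ENNReal) := by push_cast; ring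
    have hEq : (((N ^ (n-1) : ℕ) : ENNReal) * p + ((N^n - N^(n-1) : ℕ) : ENNReal) * (p * p))
        = p * p * ((N : ENNReal) ^ n) := by
      have := congrArg (fun x => x * ((N : ENNReal) ^ n)) hmul
      simpa [mul_assoc, ENNReal.inv_mul_cancel hT0 hTtop] using this
    have hsplit : p * p * ((N : ENNReal) ^ n)
        = ((N ^ (n-1) : ℕ) : ENNReal) * (p * p) + ((N^n - N^(n-1) : ℕ) : ENNReal) * (p * p) := by
      rw [hTcast, ← add_mul, ← Nat.cast_add]
      have hle : N ^ (n-1) ≤ N ^ n := Nat.pow_le_pow_right h0N (by omega)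
      rw [Nat.add_sub_cancel' hle]
      ring
    rw [hsplit] at hEq
    have hC2top : ((N^n - N^(n-1) : ℕ) : ENNReal) * (p * p) ≠ ⊤ :=
      ENNReal.mul_ne_top (ENNReal.natCast_ne_top _) (ENNReal.mul_ne_top hptop hptop)
    have hcancel : ((N ^ (n-1) : ℕ) : ENNReal) * p = ((N ^ (n-1) : ℕ) : ENNReal) * (p * p) := by
      have := (ENNReal.add_left_inj hC2top).mp hEq
      exact this
    have hC1_0 : ((N ^ (n-1) : ℕ) : ENNReal) ≠ 0 := by
      exact Nat.cast_ne_zero.mpr (pow_pos h0N (n-1)).ne'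
    have hC1top : ((N ^ (n-1) : ℕ) : ENNReal) ≠ ⊤ := ENNReal.natCast_ne_top _
    have hpp : p = p * p := by
      have h2 := congrArg (fun x => (((N ^ (n-1) : ℕ) : ENNReal))⁻¹ * x) hcancel
      simp only [← mul_assoc, ENNReal.inv_mul_cancel hC1_0 hC1top, one_mul] at h2
      exact h2
    by_cases hp0 : p = 0
    · exact Or.inl hp0
    · right
      have h2 := congrArg (fun x => p⁻¹ * x) hpp
      simp only [← mul_assoc, ENNReal.inv_mul_cancel hp0 hptop, one_mul] at h2
      exact h2.symm
  obtain ⟨c, hc⟩ := zero_one_measure_exists_singleton μ0 hzo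
  apply hYnc
  refine ⟨c, ?_⟩
  have h1 : P (Y0 ⁻¹' ({c}ᶜ)) = μ0 ({c}ᶜ) := by
    rw [hμ0, Measure.map_apply (hYmeas _) (measurableSet_singleton c).compl]
  have h2 : μ0 ({c}ᶜ) = 0 := (prob_compl_eq_zero_iff (measurableSet_singleton c)).mpr hc
  have h3 : P {ω | ¬ (Y0 ω = c)} = 0 := by
    have : {ω | ¬ (Y0 ω = c)} = Y0 ⁻¹' ({c}ᶜ) := rfl
    rw [this, h1, h2]
  exact h3
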